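/- For every prime power q there exist x, y ∈ SL(2, F_q) such that the Engel sequence e₁ = [x, y], e_{n+1} = [e_n, y] satisfies e_n ≠ 1 and e_n ≠ −1 for all n ≥ 1 (where 1 and −1 denote plus and minus the identity matrix). In particular, the dynamical system (x,y) ↦ ([x,y], y) on SL(2,F_q)² has nontrivial periodic points for every q. -/

import Mathlib

open scoped commutatorElement

/-- The Engel sequence: `engel x y 0 = e₁ = [x, y]` and
`engel x y n = e_{n+1} = [e_n, y]`. -/
def engel {G : Type*} [Group G] (x y : G) : ℕ → G
  | 0 => ⁅x, y⁆
  | n + 1 => ⁅engel x y n, y⁆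

section Aux

variable {G : Type*} [Group G]

lemma comm_eq_of {a b c : G} (h : a * b = c * (b * a)) : ⁅a, b⁆ = c := by
  have h1 : ⁅a, b⁆ = (a * b) * (b * a)⁻¹ := by
    rw [commutatorElement_def]; group
  rw [h1, h, mul_assoc, mul_inv_cancel, mul_one]

lemma engel_two_or_four (x y : G) (h : y * x = x⁻¹ * y) (hx : x ^ 6 = 1) :
    ∀ n, engel x y n = x ^ 2 ∨ engel x y n = x ^ 4 := by
  have h' : y * x * y⁻¹ = x⁻¹ := by rw [h]; group
  have hinv : y * x⁻¹ * y⁻¹ = x := by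
    calc y * x⁻¹ * y⁻¹ = (y * x * y⁻¹)⁻¹ := by group
      _ = x := by rw [h', inv_inv]
  have hc : ∀ k : ℕ, ⁅x ^ k, y⁆ = x ^ (2 * k) := by
    intro k
    have h2 : y * (x ^ k)⁻¹ * y⁻¹ = x ^ k := by
      rw [← inv_pow, ← conj_pow, hinv]
    calc ⁅x ^ k, y⁆ = x ^ k * (y * (x ^ k)⁻¹ * y⁻¹) := by
          rw [commutatorElement_def]; group
      _ = x ^ k * x ^ k := by rw [h2]
      _ = x ^ (2 * k) := by rw [two_mul, pow_add]
  intro n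
  induction n with
  | zero =>
    left
    have := hc 1
    simpa [engel] using this
  | succ n ih =>
    rcases ih with h' | h'
    · right
      show ⁅engel x y n, y⁆ = x ^ 4
      rw [h', hc 2]
    · left
      show ⁅engel x y n, y⁆ = x ^ 2
      rw [h', hc 4]
      have : x ^ (2 * 4) = x ^ 6 * x ^ 2 := by rw [← pow_add]
      rw [this, hx, one_mul]

lemma engel_cycle3 (x y e1 e2 : G) (h1 : ⁅x, y⁆ = e1) (h2 : ⁅e1, y⁆ = e2)
    (h3 : ⁅e2, y⁆ = x) :
    ∀ n, engel x y n = e1 ∨ engel x y n = e2 ∨ engel x y n = x := by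
  intro n
  induction n with
  | zero => left; exact h1
  | succ n ih =>
    rcases ih with h' | h' | h'
    · right; left; show ⁅engel x y n, y⁆ = e2; rw [h', h2]
    · right; right; show ⁅engel x y n, y⁆ = x; rw [h', h3]
    · left; show ⁅engel x y n, y⁆ = e1; rw [h', h1]

end Aux

section Matrices

variable (F : Type*) [Field F]

lemma ne_pm_one (M : Matrix (Fin 2) (Fin 2) F) (h : M 0 1 ≠ 0) : M ≠ 1 ∧ M ≠ -1 := by
  constructor
  · intro e
    apply h
    rw [e]
    simp [Matrix.one_apply]
  · intro e
    apply h
    rw [e]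
    simp [Matrix.one_apply]

open Matrix in
lemma key (a b : F) (hab : a ^ 2 + a * b + b ^ 2 = -1) :
    ∃ x y : Matrix.SpecialLinearGroup (Fin 2) F, ∀ n : ℕ,
      ((engel x y n : Matrix.SpecialLinearGroup (Fin 2) F) : Matrix (Fin 2) (Fin 2) F) ≠ 1 ∧
      ((engel x y n : Matrix.SpecialLinearGroup (Fin 2) F) : Matrix (Fin 2) (Fin 2) F) ≠ -1 := by
  set x : Matrix.SpecialLinearGroup (Fin 2) F :=
    ⟨!![0, 1; -1, 1], by norm_num [Matrix.det_fin_two_of]⟩ with hxdef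
  set y : Matrix.SpecialLinearGroup (Fin 2) F :=
    ⟨!![a, b; a + b, -a], by rw [Matrix.det_fin_two_of]; linear_combination -hab⟩ with hydef
  set x' : Matrix.SpecialLinearGroup (Fin 2) F :=
    ⟨!![1, -1; 1, 0], by norm_num [Matrix.det_fin_two_of]⟩ with hx'def
  have hxinv : x⁻¹ = x' := by
    apply inv_eq_of_mul_eq_one_right
    apply Subtype.ext
    simp only [Matrix.SpecialLinearGroup.coe_mul]
    simp only [Matrix.SpecialLinearGroup.coe_mul, hxdef, hx'def,
      Matrix.SpecialLinearGroup.coe_mk, Matrix.SpecialLinearGroup.coe_one]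
    ext i j
    fin_cases i <;> fin_cases j <;>
      simp [Matrix.mul_apply, Fin.sum_univ_two, Matrix.one_apply]
  have hcomm : y * x = x⁻¹ * y := by
    rw [hxinv]
    apply Subtype.ext
    simp only [Matrix.SpecialLinearGroup.coe_mul]
    simp only [Matrix.SpecialLinearGroup.coe_mul, hxdef, hydef, hx'def,
      Matrix.SpecialLinearGroup.coe_mk]
    ext i j
    fin_cases i <;> fin_cases j <;>
      simp [Matrix.mul_apply, Fin.sum_univ_two] <;> ring
  have hx2 : ((x ^ 2 : Matrix.SpecialLinearGroup (Fin 2) F) : Matrix (Fin 2) (Fin 2) F)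
      = !![-1, 1; -1, 0] := by
    rw [Matrix.SpecialLinearGroup.coe_pow, pow_two, hxdef,
      Matrix.SpecialLinearGroup.coe_mk]
    ext i j
    fin_cases i <;> fin_cases j <;>
      simp [Matrix.mul_apply, Fin.sum_univ_two]
  have hx4 : ((x ^ 4 : Matrix.SpecialLinearGroup (Fin 2) F) : Matrix (Fin 2) (Fin 2) F)
      = !![0, -1; 1, -1] := by
    have h44 : x ^ 4 = x ^ 2 * x ^ 2 := by rw [← pow_add]
    rw [h44, Matrix.SpecialLinearGroup.coe_mul, hx2]
    ext i j
    fin_cases i <;> fin_cases j <;>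
      simp [Matrix.mul_apply, Fin.sum_univ_two]
  have hx6 : x ^ 6 = 1 := by
    have h624 : x ^ 6 = x ^ 2 * x ^ 4 := by rw [← pow_add]
    apply Subtype.ext
    rw [h624, Matrix.SpecialLinearGroup.coe_mul, hx2, hx4,
      Matrix.SpecialLinearGroup.coe_one]
    ext i j
    fin_cases i <;> fin_cases j <;>
      simp [Matrix.mul_apply, Fin.sum_univ_two, Matrix.one_apply]
  refine ⟨x, y, ?_⟩
  intro n
  rcases engel_two_or_four x y hcomm hx6 n with h | h <;> rw [h]
  · rw [hx2]
    exact ne_pm_one F _ (by norm_num)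
  · rw [hx4]
    exact ne_pm_one F _ (by norm_num)

open Matrix in
lemma key3 (h3 : (3 : F) = 0) :
    ∃ x y : Matrix.SpecialLinearGroup (Fin 2) F, ∀ n : ℕ,
      ((engel x y n : Matrix.SpecialLinearGroup (Fin 2) F) : Matrix (Fin 2) (Fin 2) F) ≠ 1 ∧
      ((engel x y n : Matrix.SpecialLinearGroup (Fin 2) F) : Matrix (Fin 2) (Fin 2) F) ≠ -1 := by
  set x : Matrix.SpecialLinearGroup (Fin 2) F :=
    ⟨!![0, 1; -1, 0], by norm_num [Matrix.det_fin_two_of]⟩ with hxdef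
  set y : Matrix.SpecialLinearGroup (Fin 2) F :=
    ⟨!![0, 1; -1, 1], by norm_num [Matrix.det_fin_two_of]⟩ with hydef
  set e1 : Matrix.SpecialLinearGroup (Fin 2) F :=
    ⟨!![-1, -1; -1, 1], by rw [Matrix.det_fin_two_of]; linear_combination -h3⟩ with he1def
  set e2 : Matrix.SpecialLinearGroup (Fin 2) F :=
    ⟨!![-1, 1; 1, 1], by rw [Matrix.det_fin_two_of]; linear_combination -h3⟩ with he2def
  have h1 : ⁅x, y⁆ = e1 := by
    apply comm_eq_of
    apply Subtype.ext
    simp only [Matrix.SpecialLinearGroup.coe_mul]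
    simp only [Matrix.SpecialLinearGroup.coe_mul, hxdef, hydef, he1def,
      Matrix.SpecialLinearGroup.coe_mk]
    ext i j
    fin_cases i <;> fin_cases j <;>
      simp [Matrix.mul_apply, Fin.sum_univ_two] <;>
      first
        | ring1
        | linear_combination h3
        | linear_combination -h3
        | linear_combination 2 * h3
        | linear_combination -2 * h3
  have h2 : ⁅e1, y⁆ = e2 := by
    apply comm_eq_of
    apply Subtype.ext
    simp only [Matrix.SpecialLinearGroup.coe_mul]
    simp only [Matrix.SpecialLinearGroup.coe_mul, hxdef, hydef, he1def, he2def,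
      Matrix.SpecialLinearGroup.coe_mk]
    ext i j
    fin_cases i <;> fin_cases j <;>
      simp [Matrix.mul_apply, Fin.sum_univ_two] <;>
      first
        | ring1
        | linear_combination h3
        | linear_combination -h3
        | linear_combination 2 * h3
        | linear_combination -2 * h3
  have h3' : ⁅e2, y⁆ = x := by
    apply comm_eq_of
    apply Subtype.ext
    simp only [Matrix.SpecialLinearGroup.coe_mul]
    simp only [Matrix.SpecialLinearGroup.coe_mul, hxdef, hydef, he2def,
      Matrix.SpecialLinearGroup.coe_mk]
    ext i j
    fin_cases i <;> fin_cases j <;>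
      simp [Matrix.mul_apply, Fin.sum_univ_two] <;>
      first
        | ring1
        | linear_combination h3
        | linear_combination -h3
        | linear_combination 2 * h3
        | linear_combination -2 * h3
  refine ⟨x, y, ?_⟩
  intro n
  rcases engel_cycle3 x y e1 e2 h1 h2 h3' n with h | h | h <;> rw [h]
  · exact ne_pm_one F _ (by norm_num [he1def, Matrix.SpecialLinearGroup.coe_mk])
  · exact ne_pm_one F _ (by norm_num [he2def, Matrix.SpecialLinearGroup.coe_mk])
  · exact ne_pm_one F _ (by norm_num [hxdef, Matrix.SpecialLinearGroup.coe_mk])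

end Matrices

/-- For every finite field `F_q` there exist `x, y ∈ SL(2, F_q)` such that every term
of the Engel sequence `e₁ = [x, y]`, `e_{n+1} = [e_n, y]` is different from `1` and
from `−1`. -/
theorem stmt14 (F : Type*) [Field F] [Fintype F] :
    ∃ x y : Matrix.SpecialLinearGroup (Fin 2) F, ∀ n : ℕ,
      ((engel x y n : Matrix.SpecialLinearGroup (Fin 2) F) : Matrix (Fin 2) (Fin 2) F) ≠ 1 ∧
      ((engel x y n : Matrix.SpecialLinearGroup (Fin 2) F) : Matrix (Fin 2) (Fin 2) F) ≠ -1 := by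
  by_cases h3 : (3 : F) = 0
  · exact key3 F h3
  by_cases h2 : ringChar F = 2
  · have h20 : (2 : F) = 0 := by
      have := (ringChar.spec F 2).mpr (by rw [h2])
      exact_mod_cast this
    apply key F 1 0
    linear_combination h20
  · have hodd : Fintype.card F % 2 = 1 := FiniteField.odd_card_of_char_ne_two h2
    have h3ne : (3 : F) ≠ 0 := h3
    have hd : (Polynomial.C (3 : F) * Polynomial.X ^ 2).degree = 2 := by
      simpa using Polynomial.degree_C_mul_X_pow 2 h3ne
    have hg2 : (Polynomial.C (3 : F) * Polynomial.X ^ 2 + Polynomial.C 1).degree = 2 := by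
      rw [Polynomial.degree_add_eq_left_of_degree_lt, hd]
      rw [hd]
      exact lt_of_le_of_lt (Polynomial.degree_C_le) (by norm_num)
    obtain ⟨u, v, huv⟩ := FiniteField.exists_root_sum_quadratic
      (f := Polynomial.X ^ 2) (g := Polynomial.C (3 : F) * Polynomial.X ^ 2 + Polynomial.C 1)
      (Polynomial.degree_X_pow 2) hg2 hodd
    simp only [Polynomial.eval_add, Polynomial.eval_mul, Polynomial.eval_pow,
      Polynomial.eval_X, Polynomial.eval_C] at huv
    apply key F (u - v) (2 * v)
    linear_combination huv
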